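/- Let q ≥ 2 be an integer and let g : (0,1) → ℝ be differentiable with ∫_0^1 g(t) dt = 1 and ‖g′‖_∞ = sup_{(0,1)} |g′| < ∞. Then for every n ≥ 1 and every x ∈ (0,1), |g_n(x) − 1| ≤ q^{−2n} (x² − x + 1/2) Σ_{j=0}^{q^n−1} ‖g′_{n,j}‖_∞ ≤ (1/2) q^{−n} ‖g′‖_∞. -/

import Mathlib

open MeasureTheory Set

/-- `g_n(x) = q^{−n} Σ_{j=0}^{q^n−1} g(q^{−n}(j+x))`. -/
noncomputable def gIter (q : ℕ) (g : ℝ → ℝ) (n : ℕ) (x : ℝ) : ℝ :=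
  (q : ℝ) ^ (-(n : ℤ)) * ∑ j ∈ Finset.range (q ^ n), g (((j : ℝ) + x) / (q : ℝ) ^ n)

theorem stmt9
    (q : ℕ) (hq : 2 ≤ q)
    (g g' : ℝ → ℝ)
    (hderiv : ∀ x ∈ Set.Ioo (0:ℝ) 1, HasDerivAt g (g' x) x)
    (hint : ∫ t in Set.Ioo (0:ℝ) 1, g t = 1)
    -- `‖g′‖_∞ < ∞`
    (hbdd : BddAbove ((fun x => |g' x|) '' Set.Ioo (0:ℝ) 1))
    (n : ℕ) (hn : 1 ≤ n) (x : ℝ) (hx : x ∈ Set.Ioo (0:ℝ) 1) :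
    |gIter q g n x - 1|
      ≤ (q : ℝ) ^ (-(2 * n : ℤ)) * (x ^ 2 - x + 1 / 2) *
          ∑ j ∈ Finset.range (q ^ n),
            sSup ((fun y => |g' y|) ''
              Set.Ioo ((j : ℝ) / (q : ℝ) ^ n) (((j : ℝ) + 1) / (q : ℝ) ^ n))
    ∧ (q : ℝ) ^ (-(2 * n : ℤ)) * (x ^ 2 - x + 1 / 2) *
          ∑ j ∈ Finset.range (q ^ n),
            sSup ((fun y => |g' y|) ''
              Set.Ioo ((j : ℝ) / (q : ℝ) ^ n) (((j : ℝ) + 1) / (q : ℝ) ^ n))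
        ≤ (1 / 2) * (q : ℝ) ^ (-(n : ℤ)) * sSup ((fun y => |g' y|) '' Set.Ioo (0:ℝ) 1) := by
  obtain ⟨hx0, hx1⟩ := hx
  have hq1 : (1:ℝ) < (q:ℝ) := by exact_mod_cast lt_of_lt_of_le one_lt_two (by exact_mod_cast hq)
  set Q : ℝ := (q:ℝ) ^ n with hQdef
  have hQ : 0 < Q := by positivity
  have hQn : Q = ((q ^ n : ℕ) : ℝ) := by push_cast; rfl
  set f : ℝ → ℝ := fun y => |g' y| with hfdef
  set M : ℝ := sSup (f '' Ioo (0:ℝ) 1) with hMdef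
  set Mj : ℕ → ℝ := fun j => sSup (f '' Ioo ((j:ℝ)/Q) (((j:ℝ)+1)/Q)) with hMjdef
  -- interval facts
  have hab : ∀ j : ℕ, (j:ℝ)/Q < ((j:ℝ)+1)/Q := by
    intro j
    rw [div_lt_div_iff₀ hQ hQ]
    nlinarith [Nat.cast_nonneg (α := ℝ) j]
  have hsub : ∀ j < q ^ n, Ioo ((j:ℝ)/Q) (((j:ℝ)+1)/Q) ⊆ Ioo (0:ℝ) 1 := by
    intro j hj y hy
    have hj' : ((j:ℝ)+1) ≤ Q := by
      rw [hQn]; have : (j+1 : ℕ) ≤ q ^ n := hj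
      exact_mod_cast this
    constructor
    · have : (0:ℝ) ≤ (j:ℝ)/Q := by positivity
      linarith [hy.1]
    · have : ((j:ℝ)+1)/Q ≤ 1 := by rw [div_le_one hQ]; exact hj'
      linarith [hy.2]
  have hbddj : ∀ j < q ^ n, BddAbove (f '' Ioo ((j:ℝ)/Q) (((j:ℝ)+1)/Q)) :=
    fun j hj => hbdd.mono (image_mono (hsub j hj))
  have hne : ∀ j : ℕ, (f '' Ioo ((j:ℝ)/Q) (((j:ℝ)+1)/Q)).Nonempty :=
    fun j => (nonempty_Ioo.2 (hab j)).image f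
  have hMj0 : ∀ j < q ^ n, 0 ≤ Mj j := by
    intro j hj
    obtain ⟨y, hy⟩ := nonempty_Ioo.2 (hab j)
    exact le_trans (abs_nonneg (g' y)) (le_csSup (hbddj j hj) ⟨y, hy, rfl⟩)
  have hMjM : ∀ j < q ^ n, Mj j ≤ M :=
    fun j hj => csSup_le_csSup hbdd (hne j) (image_mono (hsub j hj))
  have hM0 : 0 ≤ M := by
    refine le_trans (abs_nonneg (g' (1/2))) (le_csSup hbdd ⟨1/2, ⟨by norm_num, by norm_num⟩, rfl⟩)
  -- integrability
  have hgInt : IntegrableOn g (Ioo (0:ℝ) 1) := by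
    by_contra hcon
    rw [MeasureTheory.integral_undef hcon] at hint; norm_num at hint
  have hgIntj : ∀ j < q ^ n, IntegrableOn g (Ioo ((j:ℝ)/Q) (((j:ℝ)+1)/Q)) :=
    fun j hj => hgInt.mono_set (hsub j hj)
  have hIIj : ∀ j < q ^ n, IntervalIntegrable g volume ((j:ℝ)/Q) (((j:ℝ)+1)/Q) := by
    intro j hj
    rw [intervalIntegrable_iff_integrableOn_Ioo_of_le (hab j).le]
    exact hgIntj j hj
  -- splitting the integral
  set a : ℕ → ℝ := fun i => (i:ℝ)/Q with hadef
  have hacast : ∀ j : ℕ, a (j+1) = ((j:ℝ)+1)/Q := by intro j; simp [hadef]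
  have hsum : ∑ j ∈ Finset.range (q ^ n), ∫ t in a j..a (j+1), g t = 1 := by
    rw [intervalIntegral.sum_integral_adjacent_intervals (fun j hj => by
      rw [hacast j]; exact hIIj j hj)]
    have h0 : a 0 = 0 := by simp [hadef]
    have h1 : a (q ^ n) = 1 := by
      simp only [hadef]; rw [← hQn]; exact div_self hQ.ne'
    rw [h0, h1, intervalIntegral.integral_of_le zero_le_one,
      MeasureTheory.integral_Ioc_eq_integral_Ioo, hint]
  -- the per-interval estimate
  have key : ∀ j < q ^ n,
      |Q⁻¹ * g (((j:ℝ) + x)/Q) - ∫ t in a j..a (j+1), g t|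
        ≤ Mj j * ((x ^ 2 - x + 1/2) / Q ^ 2) := by
    intro j hj
    set aj : ℝ := (j:ℝ)/Q with hajdef
    set bj : ℝ := ((j:ℝ)+1)/Q with hbjdef
    set c : ℝ := ((j:ℝ)+x)/Q with hcdef
    have hajc : aj < c := by
      rw [hajdef, hcdef, div_lt_div_iff₀ hQ hQ]; nlinarith
    have hcbj : c < bj := by
      rw [hcdef, hbjdef, div_lt_div_iff₀ hQ hQ]; nlinarith
    have hcmem : c ∈ Ioo aj bj := ⟨hajc, hcbj⟩
    have habj : aj < bj := hab j
    have hba : bj - aj = Q⁻¹ := by rw [hajdef, hbjdef]; field_simp; ring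
    -- Lipschitz estimate on the open subinterval
    have hlip : ∀ z ∈ Ioo aj bj, |g c - g z| ≤ Mj j * |c - z| := by
      intro z hz
      have := Convex.norm_image_sub_le_of_norm_hasDerivWithin_le
        (f := g) (f' := g') (s := Ioo aj bj) (C := Mj j)
        (fun y hy => (hderiv y (hsub j hj hy)).hasDerivWithinAt)
        (fun y hy => by
          rw [Real.norm_eq_abs]
          exact le_csSup (hbddj j hj) ⟨y, hy, rfl⟩)
        (convex_Ioo _ _) hz hcmem
      simpa [Real.norm_eq_abs] using this
    have hconst : Q⁻¹ * g c = ∫ t in aj..bj, g c := by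
      rw [intervalIntegral.integral_const, smul_eq_mul, hba]
    have hdiff : Q⁻¹ * g c - (∫ t in a j..a (j+1), g t)
        = ∫ t in aj..bj, (g c - g t) := by
      rw [intervalIntegral.integral_sub (intervalIntegrable_const) (hIIj j hj), ← hconst,
        hacast j]
    rw [hdiff]
    have step1 : |∫ t in aj..bj, (g c - g t)| ≤ ∫ t in aj..bj, |g c - g t| :=
      intervalIntegral.abs_integral_le_integral_abs habj.le
    have hcont : Continuous (fun t : ℝ => Mj j * |c - t|) := by
      apply Continuous.mul continuous_const
      exact (continuous_const.sub continuous_id).abs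
    have step2 : (∫ t in aj..bj, |g c - g t|) ≤ ∫ t in aj..bj, Mj j * |c - t| := by
      rw [intervalIntegral.integral_of_le habj.le, intervalIntegral.integral_of_le habj.le,
        MeasureTheory.integral_Ioc_eq_integral_Ioo,
        MeasureTheory.integral_Ioc_eq_integral_Ioo]
      apply MeasureTheory.setIntegral_mono_on
      · exact ((integrableOn_const measure_Ioo_lt_top.ne).sub (hgIntj j hj)).abs
      · exact hcont.integrableOn_Icc.mono_set Ioo_subset_Icc_self
      · exact measurableSet_Ioo
      · exact fun t ht => hlip t ht
    have hint1 : IntervalIntegrable (fun t : ℝ => |c - t|) volume aj c :=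
      ((continuous_const.sub continuous_id).abs).intervalIntegrable _ _
    have hint2 : IntervalIntegrable (fun t : ℝ => |c - t|) volume c bj :=
      ((continuous_const.sub continuous_id).abs).intervalIntegrable _ _
    have habs : (∫ t in aj..bj, |c - t|) = (x ^ 2 - x + 1/2) / Q ^ 2 := by
      rw [← intervalIntegral.integral_add_adjacent_intervals hint1 hint2]
      have e1 : (∫ t in aj..c, |c - t|) = ∫ t in aj..c, (c - t) := by
        apply intervalIntegral.integral_congr
        intro t ht
        rw [uIcc_of_le hajc.le] at ht
        exact abs_of_nonneg (by linarith [ht.2])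
      have e2 : (∫ t in c..bj, |c - t|) = ∫ t in c..bj, (t - c) := by
        apply intervalIntegral.integral_congr
        intro t ht
        rw [uIcc_of_le hcbj.le] at ht
        show |c - t| = t - c
        rw [abs_sub_comm]
        exact abs_of_nonneg (by linarith [ht.1])
      rw [e1, e2,
        intervalIntegral.integral_sub intervalIntegrable_const
          (intervalIntegral.intervalIntegrable_id),
        intervalIntegral.integral_sub intervalIntegral.intervalIntegrable_id
          intervalIntegrable_const,
        intervalIntegral.integral_const, intervalIntegral.integral_const,
        integral_id, integral_id, smul_eq_mul, smul_eq_mul]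
      rw [hajdef, hbjdef, hcdef]
      field_simp
      ring
    have step3 : (∫ t in aj..bj, Mj j * |c - t|) = Mj j * ((x ^ 2 - x + 1/2) / Q ^ 2) := by
      rw [intervalIntegral.integral_const_mul, habs]
    calc |∫ t in aj..bj, (g c - g t)| ≤ ∫ t in aj..bj, |g c - g t| := step1
      _ ≤ ∫ t in aj..bj, Mj j * |c - t| := step2
      _ = Mj j * ((x ^ 2 - x + 1/2) / Q ^ 2) := step3
  -- assemble the first inequality
  have hq2n : (q:ℝ) ^ (-(2 * n : ℤ)) = (Q ^ 2)⁻¹ := by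
    rw [zpow_neg, hQdef, ← pow_mul, ← zpow_natCast (q:ℝ) (n * 2)]
    congr 1; push_cast; ring
  have hqn : (q:ℝ) ^ (-(n : ℤ)) = Q⁻¹ := by rw [zpow_neg, zpow_natCast]
  have hexp : gIter q g n x - 1
      = ∑ j ∈ Finset.range (q ^ n), (Q⁻¹ * g (((j:ℝ)+x)/Q) - ∫ t in a j..a (j+1), g t) := by
    rw [Finset.sum_sub_distrib, hsum, gIter, hqn, ← Finset.mul_sum]
  have first : |gIter q g n x - 1|
      ≤ (Q ^ 2)⁻¹ * (x ^ 2 - x + 1/2) * ∑ j ∈ Finset.range (q ^ n), Mj j := by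
    rw [hexp]
    calc |∑ j ∈ Finset.range (q ^ n), (Q⁻¹ * g (((j:ℝ)+x)/Q) - ∫ t in a j..a (j+1), g t)|
        ≤ ∑ j ∈ Finset.range (q ^ n),
            |Q⁻¹ * g (((j:ℝ)+x)/Q) - ∫ t in a j..a (j+1), g t| :=
          Finset.abs_sum_le_sum_abs _ _
      _ ≤ ∑ j ∈ Finset.range (q ^ n), Mj j * ((x ^ 2 - x + 1/2) / Q ^ 2) :=
          Finset.sum_le_sum (fun j hj => key j (Finset.mem_range.mp hj))
      _ = (Q ^ 2)⁻¹ * (x ^ 2 - x + 1/2) * ∑ j ∈ Finset.range (q ^ n), Mj j := by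
          rw [← Finset.sum_mul]; ring
  -- second inequality
  have hSnonneg : 0 ≤ ∑ j ∈ Finset.range (q ^ n), Mj j :=
    Finset.sum_nonneg (fun j hj => hMj0 j (Finset.mem_range.mp hj))
  have hSle : ∑ j ∈ Finset.range (q ^ n), Mj j ≤ Q * M := by
    calc ∑ j ∈ Finset.range (q ^ n), Mj j ≤ ∑ j ∈ Finset.range (q ^ n), M :=
          Finset.sum_le_sum (fun j hj => hMjM j (Finset.mem_range.mp hj))
      _ = (q ^ n : ℕ) * M := by rw [Finset.sum_const, Finset.card_range, nsmul_eq_mul]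
      _ = Q * M := by rw [hQn]
  have hhalf : x ^ 2 - x + 1/2 ≤ 1/2 := by nlinarith
  have hpos : 0 ≤ x ^ 2 - x + 1/2 := by nlinarith
  have second : (Q ^ 2)⁻¹ * (x ^ 2 - x + 1/2) * ∑ j ∈ Finset.range (q ^ n), Mj j
      ≤ 1/2 * Q⁻¹ * M := by
    calc (Q ^ 2)⁻¹ * (x ^ 2 - x + 1/2) * ∑ j ∈ Finset.range (q ^ n), Mj j
        ≤ (Q ^ 2)⁻¹ * (1/2) * (Q * M) := by
          apply mul_le_mul
          · apply mul_le_mul_of_nonneg_left hhalf (by positivity)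
          · exact hSle
          · exact hSnonneg
          · positivity
      _ = 1/2 * Q⁻¹ * M := by field_simp
  rw [hq2n]
  exact ⟨first, by rw [hqn]; exact second⟩
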